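/- Let n be odd, and consider the RFM with continuous positive T-periodic rates such that for every i ∈ {1,3,…,n-2} there exists αᵢ > 0 with uᵢ(t) = αᵢ u_{i+1}(t) for all t (i.e., the internal rates are proportional in pairs). Then there is no gain of entrainment: for the T-periodic solution x, (1/T)∫₀ᵀ u_n(t) x_n(t) dt ≤ ū_n e_n, where e is the equilibrium of the averaged system. -/

import Mathlib

open MeasureTheory intervalIntegral Real Filter

private lemma int_deriv_zero (T : ℝ) (f g : ℝ → ℝ)
    (hf : ∀ t, HasDerivAt f (g t) t) (hg : Continuous g) (hper : f T = f 0) :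
    ∫ t in (0:ℝ)..T, g t = 0 := by
  rw [intervalIntegral.integral_eq_sub_of_hasDerivAt (fun t _ => hf t)
    (hg.intervalIntegrable _ _), hper, sub_self]

private lemma int_pos (T : ℝ) (hT : 0 < T) (f : ℝ → ℝ) (hf : Continuous f)
    (hpos : ∀ t, 0 < f t) : 0 < ∫ t in (0:ℝ)..T, f t :=
  intervalIntegral.intervalIntegral_pos_of_pos (hf.intervalIntegrable _ _) hpos hT

private lemma int_cs (T : ℝ) (hT : 0 < T) (f g : ℝ → ℝ)
    (hf : Continuous f) (hg : Continuous g)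
    (hfpos : ∀ t, 0 < f t) (hgpos : ∀ t, 0 < g t) :
    (∫ t in (0:ℝ)..T, f t) ^ 2
      ≤ (∫ t in (0:ℝ)..T, f t * g t) * ∫ t in (0:ℝ)..T, f t / g t := by
  have hgne : ∀ t, g t ≠ 0 := fun t => (hgpos t).ne'
  have hI1pos : 0 < ∫ t in (0:ℝ)..T, f t * g t :=
    int_pos T hT _ (hf.mul hg) fun t => mul_pos (hfpos t) (hgpos t)
  set I := ∫ t in (0:ℝ)..T, f t with hI
  set I1 := ∫ t in (0:ℝ)..T, f t * g t with hI1
  set I2 := ∫ t in (0:ℝ)..T, f t / g t with hI2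
  set s := I / I1 with hs
  have key : (0:ℝ) ≤ s ^ 2 * I1 - 2 * s * I + I2 := by
    have h1 : (0:ℝ) ≤ ∫ t in (0:ℝ)..T, f t * (s * g t - 1) ^ 2 / g t :=
      intervalIntegral.integral_nonneg hT.le fun t _ => by
        have h1 := hfpos t; have h2 := hgpos t; positivity
    have h2 : (∫ t in (0:ℝ)..T, f t * (s * g t - 1) ^ 2 / g t)
        = ∫ t in (0:ℝ)..T, (s ^ 2 * (f t * g t) - 2 * s * f t + f t / g t) :=
      intervalIntegral.integral_congr fun t _ => by
        field_simp [hgne t]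
        ring
    have i1 : IntervalIntegrable (fun t => s ^ 2 * (f t * g t) - 2 * s * f t) volume 0 T :=
      ((continuous_const.mul (hf.mul hg)).sub (continuous_const.mul hf)).intervalIntegrable _ _
    have i2 : IntervalIntegrable (fun t => f t / g t) volume 0 T :=
      (hf.div hg hgne).intervalIntegrable _ _
    have i3 : IntervalIntegrable (fun t => s ^ 2 * (f t * g t)) volume 0 T :=
      (continuous_const.mul (hf.mul hg)).intervalIntegrable _ _
    have i4 : IntervalIntegrable (fun t => 2 * s * f t) volume 0 T :=
      (continuous_const.mul hf).intervalIntegrable _ _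
    rw [h2, intervalIntegral.integral_add i1 i2, intervalIntegral.integral_sub i3 i4,
      intervalIntegral.integral_const_mul, intervalIntegral.integral_const_mul] at h1
    exact h1
  have h4 : (s ^ 2 * I1 - 2 * s * I + I2) * I1 = I1 * I2 - I ^ 2 := by
    rw [hs]; field_simp; ring
  linarith [mul_nonneg key hI1pos.le, h4]



private lemma site_ineq (T : ℝ) (hT : 0 < T) (a b p q r : ℝ → ℝ)
    (ha : Continuous a) (hb : Continuous b) (hp : Continuous p) (hr : Continuous r)
    (hq : Differentiable ℝ q)
    (hapos : ∀ t, 0 < a t) (hbpos : ∀ t, 0 < b t) (hppos : ∀ t, 0 < p t)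
    (hrnn : ∀ t, 0 ≤ r t) (hr1 : ∀ t, r t < 1)
    (hqmem : ∀ t, q t ∈ Set.Ioo (0:ℝ) 1) (hqper : q T = q 0)
    (hd : ∀ t, deriv q t = a t * p t * (1 - q t) - b t * q t * (1 - r t)) :
    (∫ t in (0:ℝ)..T, a t * p t * (1 - q t)) *
      ((∫ t in (0:ℝ)..T, b t * (1 - r t)) + (∫ t in (0:ℝ)..T, a t * p t))
      ≤ (∫ t in (0:ℝ)..T, b t * (1 - r t)) * (∫ t in (0:ℝ)..T, a t * p t) := by
  have hqc : Continuous q := hq.continuous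
  have hq0 : ∀ t, 0 < q t := fun t => (hqmem t).1
  have hq1 : ∀ t, q t < 1 := fun t => (hqmem t).2
  have hq1' : ∀ t, 0 < 1 - q t := fun t => by linarith [hq1 t]
  have hq' : ∀ t, HasDerivAt q (deriv q t) t := fun t => (hq t).hasDerivAt
  have hdc : Continuous (deriv q) := by
    have h := funext hd
    rw [h]
    exact ((ha.mul hp).mul (continuous_const.sub hqc)).sub
      ((hb.mul hqc).mul (continuous_const.sub hr))
  have cf1 : Continuous fun t => a t * p t * (1 - q t) :=
    (ha.mul hp).mul (continuous_const.sub hqc)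
  have cf2 : Continuous fun t => b t * q t * (1 - r t) :=
    (hb.mul hqc).mul (continuous_const.sub hr)
  have cP : Continuous fun t => b t * (1 - r t) := hb.mul (continuous_const.sub hr)
  have cQ : Continuous fun t => a t * p t := ha.mul hp
  have f1pos : ∀ t, 0 < a t * p t * (1 - q t) :=
    fun t => mul_pos (mul_pos (hapos t) (hppos t)) (hq1' t)
  have f2pos : ∀ t, 0 < b t * q t * (1 - r t) :=
    fun t => mul_pos (mul_pos (hbpos t) (hq0 t)) (by linarith [hr1 t])
  have hPpos : 0 < ∫ t in (0:ℝ)..T, b t * (1 - r t) :=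
    int_pos T hT _ cP fun t => mul_pos (hbpos t) (by linarith [hr1 t])
  have hQpos : 0 < ∫ t in (0:ℝ)..T, a t * p t :=
    int_pos T hT _ cQ fun t => mul_pos (hapos t) (hppos t)
  have hIRpos : 0 < ∫ t in (0:ℝ)..T, a t * p t * (1 - q t) := int_pos T hT _ cf1 f1pos
  -- D1 : ∫ deriv q = 0  ⇒ IR1 = IR2
  have hD1 : (∫ t in (0:ℝ)..T, deriv q t) = 0 := int_deriv_zero T q (deriv q) hq' hdc hqper
  have E1 : (∫ t in (0:ℝ)..T, a t * p t * (1 - q t))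
      = ∫ t in (0:ℝ)..T, b t * q t * (1 - r t) := by
    have h1 : (∫ t in (0:ℝ)..T, deriv q t)
        = ∫ t in (0:ℝ)..T, (a t * p t * (1 - q t) - b t * q t * (1 - r t)) :=
      intervalIntegral.integral_congr fun t _ => hd t
    rw [intervalIntegral.integral_sub (cf1.intervalIntegrable _ _)
      (cf2.intervalIntegrable _ _), hD1] at h1
    linarith
  -- D2 : ∫ deriv q / q = 0  ⇒  ∫ f1/q = P
  have hD2 : (∫ t in (0:ℝ)..T, deriv q t / q t) = 0 := by
    apply int_deriv_zero T (fun s => Real.log (q s)) _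
      (fun t => (hq' t).log (hq0 t).ne') (hdc.div hqc fun t => (hq0 t).ne')
    rw [hqper]
  have E2 : (∫ t in (0:ℝ)..T, a t * p t * (1 - q t) / q t)
      = ∫ t in (0:ℝ)..T, b t * (1 - r t) := by
    have h1 : (∫ t in (0:ℝ)..T, deriv q t / q t)
        = ∫ t in (0:ℝ)..T, (a t * p t * (1 - q t) / q t - b t * (1 - r t)) := by
      apply intervalIntegral.integral_congr
      intro t _
      show deriv q t / q t = a t * p t * (1 - q t) / q t - b t * (1 - r t)
      rw [hd t]
      field_simp [(hq0 t).ne']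
      try ring
    have i1 : IntervalIntegrable (fun t => a t * p t * (1 - q t) / q t) volume 0 T :=
      (cf1.div hqc fun t => (hq0 t).ne').intervalIntegrable _ _
    rw [intervalIntegral.integral_sub i1 (cP.intervalIntegrable _ _), hD2] at h1
    linarith
  -- D3 : ∫ deriv q / (1-q) = 0  ⇒  ∫ f2/(1-q) = Q
  have hM : ∀ t, HasDerivAt (fun s => -Real.log (1 - q s)) (deriv q t / (1 - q t)) t := by
    intro t
    have h1 : HasDerivAt (fun s => 1 - q s) (-deriv q t) t := by
      exact (hq' t).const_sub 1
    have h2 : HasDerivAt (fun s => -Real.log (1 - q s)) (-(-deriv q t / (1 - q t))) t :=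
      (h1.log (hq1' t).ne').neg
    convert h2 using 1
    field_simp
  have hD3 : (∫ t in (0:ℝ)..T, deriv q t / (1 - q t)) = 0 := by
    apply int_deriv_zero T (fun s => -Real.log (1 - q s)) _ hM
      (hdc.div (continuous_const.sub hqc) fun t => (hq1' t).ne')
    rw [hqper]
  have E3 : (∫ t in (0:ℝ)..T, b t * q t * (1 - r t) / (1 - q t))
      = ∫ t in (0:ℝ)..T, a t * p t := by
    have h1 : (∫ t in (0:ℝ)..T, deriv q t / (1 - q t))
        = ∫ t in (0:ℝ)..T, (a t * p t - b t * q t * (1 - r t) / (1 - q t)) := by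
      apply intervalIntegral.integral_congr
      intro t _
      show deriv q t / (1 - q t) = a t * p t - b t * q t * (1 - r t) / (1 - q t)
      rw [hd t]
      field_simp [(hq1' t).ne']
      try ring
    have i1 : IntervalIntegrable (fun t => b t * q t * (1 - r t) / (1 - q t)) volume 0 T :=
      (cf2.div (continuous_const.sub hqc) fun t => (hq1' t).ne').intervalIntegrable _ _
    rw [intervalIntegral.integral_sub (cQ.intervalIntegrable _ _) i1, hD3] at h1
    linarith
  -- D4 : ∫ deriv q * (1-q) = 0  ⇒  ∫ f1*(1-q) = ∫ f2*(1-q)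
  have hN : ∀ t, HasDerivAt (fun s => q s - q s ^ 2 / 2) (deriv q t * (1 - q t)) t := by
    intro t
    have h1 : HasDerivAt (fun s => q s - q s ^ 2 / 2) (deriv q t - ↑2 * q t ^ (2 - 1) * deriv q t / 2) t :=
      (hq' t).sub (((hq' t).pow 2).div_const 2)
    convert h1 using 1
    simp
    ring
  have hD4 : (∫ t in (0:ℝ)..T, deriv q t * (1 - q t)) = 0 := by
    apply int_deriv_zero T _ _ hN (hdc.mul (continuous_const.sub hqc))
    rw [hqper]
  have E4 : (∫ t in (0:ℝ)..T, a t * p t * (1 - q t) * (1 - q t))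
      = ∫ t in (0:ℝ)..T, b t * q t * (1 - r t) * (1 - q t) := by
    have h1 : (∫ t in (0:ℝ)..T, deriv q t * (1 - q t))
        = ∫ t in (0:ℝ)..T, (a t * p t * (1 - q t) * (1 - q t)
            - b t * q t * (1 - r t) * (1 - q t)) := by
      apply intervalIntegral.integral_congr
      intro t _
      show deriv q t * (1 - q t) = _
      rw [hd t]
      ring
    rw [intervalIntegral.integral_sub (f := fun t => a t * p t * (1 - q t) * (1 - q t))
      (g := fun t => b t * q t * (1 - r t) * (1 - q t))
      ((cf1.mul (continuous_const.sub hqc)).intervalIntegrable _ _)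
      ((cf2.mul (continuous_const.sub hqc)).intervalIntegrable _ _), hD4] at h1
    linarith
  -- A + B = IR1
  have E5 : (∫ t in (0:ℝ)..T, a t * p t * (1 - q t))
      = (∫ t in (0:ℝ)..T, a t * p t * (1 - q t) * q t)
        + ∫ t in (0:ℝ)..T, a t * p t * (1 - q t) * (1 - q t) := by
    rw [← intervalIntegral.integral_add (f := fun t => a t * p t * (1 - q t) * q t)
      (g := fun t => a t * p t * (1 - q t) * (1 - q t)) ((cf1.mul hqc).intervalIntegrable _ _)
      ((cf1.mul (continuous_const.sub hqc)).intervalIntegrable _ _)]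
    apply intervalIntegral.integral_congr
    intro t _
    ring
  have CS1 := int_cs T hT (fun t => a t * p t * (1 - q t)) q cf1 hqc f1pos hq0
  have CS2 := int_cs T hT (fun t => b t * q t * (1 - r t)) (fun t => 1 - q t)
    cf2 (continuous_const.sub hqc) f2pos hq1'
  rw [E2] at CS1
  rw [E3, ← E1] at CS2
  rw [E4] at E5
  nlinarith [CS1, CS2, E5, hIRpos, hPpos, hQpos,
    mul_le_mul_of_nonneg_right CS1 hQpos.le,
    mul_le_mul_of_nonneg_right CS2 hPpos.le, mul_pos hPpos hQpos]





theorem rfm_no_goe_odd_proportional_pairs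
    (n : ℕ) (hn : 1 ≤ n) (T : ℝ) (hT : 0 < T)
    (u : ℕ → ℝ → ℝ) (x : ℕ → ℝ → ℝ) (e : ℕ → ℝ)
    (hu_cont : ∀ i, i ≤ n → Continuous (u i))
    (hu_pos : ∀ i, i ≤ n → ∀ t, 0 < u i t)
    (hu_per : ∀ i, i ≤ n → ∀ t, u i (t + T) = u i t)
    (hx0 : ∀ t, x 0 t = 1) (hxtop : ∀ t, x (n+1) t = 0)
    (hxdiff : ∀ i, 1 ≤ i → i ≤ n → Differentiable ℝ (x i))
    (hxper : ∀ i, 1 ≤ i → i ≤ n → ∀ t, x i (t + T) = x i t)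
    (hxmem : ∀ i, 1 ≤ i → i ≤ n → ∀ t, x i t ∈ Set.Ioo (0:ℝ) 1)
    (hode : ∀ i, 1 ≤ i → i ≤ n → ∀ t,
      deriv (x i) t
        = u (i-1) t * x (i-1) t * (1 - x i t) - u i t * x i t * (1 - x (i+1) t))
    (he0 : e 0 = 1) (hetop : e (n+1) = 0)
    (hemem : ∀ i, 1 ≤ i → i ≤ n → e i ∈ Set.Ioo (0:ℝ) 1)
    (heq : ∀ i, 1 ≤ i → i ≤ n →
      (1/T * ∫ t in (0:ℝ)..T, u (i-1) t) * e (i-1) * (1 - e i)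
        = (1/T * ∫ t in (0:ℝ)..T, u i t) * e i * (1 - e (i+1)))
    (hodd : Odd n)
    (hprop : ∀ i, Odd i → i ≤ n - 2 →
      ∃ α : ℝ, 0 < α ∧ ∀ t, u i t = α * u (i+1) t) :
    1/T * ∫ t in (0:ℝ)..T, u n t * x n t ≤ (1/T * ∫ t in (0:ℝ)..T, u n t) * e n := by
  have hnodd : n % 2 = 1 := Nat.odd_iff.mp hodd
  -- basic continuity / bounds for x
  have hxc : ∀ i, i ≤ n+1 → Continuous (x i) := by
    intro i hi
    rcases Nat.eq_zero_or_pos i with h0 | h1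
    · subst h0
      rw [show x 0 = fun _ => (1:ℝ) from funext hx0]
      exact continuous_const
    · rcases Nat.lt_or_ge i (n+1) with h2 | h2
      · exact (hxdiff i h1 (by omega)).continuous
      · have h3 : i = n + 1 := by omega
        subst h3
        rw [show x (n+1) = fun _ => (0:ℝ) from funext hxtop]
        exact continuous_const
  have hxpos : ∀ i, i ≤ n → ∀ t, 0 < x i t := by
    intro i hi t
    rcases Nat.eq_zero_or_pos i with h0 | h1
    · subst h0; rw [hx0 t]; norm_num
    · exact (hxmem i h1 hi t).1
  have hxlt : ∀ i, 1 ≤ i → i ≤ n+1 → ∀ t, x i t < 1 := by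
    intro i h1 h2 t
    rcases Nat.lt_or_ge i (n+1) with h | h
    · exact (hxmem i h1 (by omega) t).2
    · have h3 : i = n + 1 := by omega
      rw [h3, hxtop t]; norm_num
  have hxnn : ∀ i, i ≤ n+1 → ∀ t, 0 ≤ x i t := by
    intro i hi t
    rcases Nat.lt_or_ge i (n+1) with h | h
    · exact (hxpos i (by omega) t).le
    · have h3 : i = n + 1 := by omega
      rw [h3, hxtop t]
  have hxcont : ∀ i, i ≤ n → Continuous (fun t => u i t * x i t * (1 - x (i+1) t)) :=
    fun i hi => ((hu_cont i hi).mul (hxc i (by omega))).mul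
      (continuous_const.sub (hxc (i+1) (by omega)))
  -- flux integrals are all equal
  have hstep : ∀ i, 1 ≤ i → i ≤ n →
      (∫ t in (0:ℝ)..T, u (i-1) t * x (i-1) t * (1 - x i t))
        = ∫ t in (0:ℝ)..T, u i t * x i t * (1 - x (i+1) t) := by
    intro i h1 h2
    have hc1 : Continuous (fun t => u (i-1) t * x (i-1) t * (1 - x i t)) := by
      have h3 := hxcont (i-1) (by omega)
      rwa [show i - 1 + 1 = i by omega] at h3
    have hdc : Continuous (deriv (x i)) := by
      rw [show deriv (x i) = fun t =>
        u (i-1) t * x (i-1) t * (1 - x i t) - u i t * x i t * (1 - x (i+1) t)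
        from funext (hode i h1 h2)]
      exact hc1.sub (hxcont i h2)
    have hz : (∫ t in (0:ℝ)..T, deriv (x i) t) = 0 := by
      apply int_deriv_zero T (x i) _ (fun t => (hxdiff i h1 h2 t).hasDerivAt) hdc
      have h4 := hxper i h1 h2 0
      rwa [zero_add] at h4
    have h5 : (∫ t in (0:ℝ)..T, deriv (x i) t)
        = ∫ t in (0:ℝ)..T, (u (i-1) t * x (i-1) t * (1 - x i t)
            - u i t * x i t * (1 - x (i+1) t)) :=
      intervalIntegral.integral_congr fun t _ => hode i h1 h2 t
    rw [intervalIntegral.integral_sub (hc1.intervalIntegrable _ _)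
      ((hxcont i h2).intervalIntegrable _ _), hz] at h5
    linarith
  set IF0 := ∫ t in (0:ℝ)..T, u 0 t * x 0 t * (1 - x 1 t) with hIF0def
  have hIF : ∀ i, i ≤ n →
      (∫ t in (0:ℝ)..T, u i t * x i t * (1 - x (i+1) t)) = IF0 := by
    intro i
    induction i with
    | zero => intro _; rfl
    | succ m ih =>
      intro h
      have h6 := hstep (m+1) (by omega) h
      simp only [Nat.add_sub_cancel] at h6
      rw [← h6]
      exact ih (by omega)
  have hIF0pos : 0 < IF0 := by
    apply int_pos T hT _ (hxcont 0 (by omega))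
    intro t
    have h1 := hu_pos 0 (by omega) t
    have h2 := hxpos 0 (by omega) t
    have h3 := hxlt 1 le_rfl (by omega) t
    have h4 : (0:ℝ) < 1 - x 1 t := by linarith
    positivity
  -- positivity of the basic integrals
  have hPpos : ∀ k, k ≤ n → 0 < ∫ t in (0:ℝ)..T, u k t * (1 - x (k+1) t) := by
    intro k hk
    apply int_pos T hT _ ((hu_cont k hk).mul (continuous_const.sub (hxc (k+1) (by omega))))
    intro t
    have h1 := hu_pos k hk t
    have h2 := hxlt (k+1) (by omega) (by omega) t
    have h3 : (0:ℝ) < 1 - x (k+1) t := by linarith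
    exact mul_pos h1 h3
  have hQxpos : ∀ k, k ≤ n → 0 < ∫ t in (0:ℝ)..T, u k t * x k t := by
    intro k hk
    apply int_pos T hT _ ((hu_cont k hk).mul (hxc k (by omega)))
    intro t
    exact mul_pos (hu_pos k hk t) (hxpos k hk t)
  have hIupos : ∀ k, k ≤ n → 0 < ∫ t in (0:ℝ)..T, u k t :=
    fun k hk => int_pos T hT _ (hu_cont k hk) (hu_pos k hk)
  -- the site inequality at each site
  have hsite : ∀ k, 1 ≤ k → k ≤ n →
      IF0 * ((∫ t in (0:ℝ)..T, u k t * (1 - x (k+1) t))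
          + (∫ t in (0:ℝ)..T, u (k-1) t * x (k-1) t))
        ≤ (∫ t in (0:ℝ)..T, u k t * (1 - x (k+1) t))
          * (∫ t in (0:ℝ)..T, u (k-1) t * x (k-1) t) := by
    intro k h1 h2
    have hs := site_ineq T hT (u (k-1)) (u k) (x (k-1)) (x k) (x (k+1))
      (hu_cont (k-1) (by omega)) (hu_cont k h2) (hxc (k-1) (by omega))
      (hxc (k+1) (by omega)) (hxdiff k h1 h2)
      (hu_pos (k-1) (by omega)) (hu_pos k h2) (hxpos (k-1) (by omega))
      (hxnn (k+1) (by omega)) (hxlt (k+1) (by omega) (by omega))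
      (hxmem k h1 h2) (by have h4 := hxper k h1 h2 0; rwa [zero_add] at h4)
      (hode k h1 h2)
    have h3 := hIF (k-1) (by omega)
    rw [show k - 1 + 1 = k by omega] at h3
    rwa [h3] at hs
  -- the candidate sequence c
  set c : ℕ → ℝ := fun i =>
    if i = 0 then 1
    else if i % 2 = 1 then IF0 / (∫ t in (0:ℝ)..T, u i t * (1 - x (i+1) t))
    else (∫ t in (0:ℝ)..T, u i t * x i t) / (∫ t in (0:ℝ)..T, u i t) with hcdef
  have hc0 : c 0 = 1 := by simp [hcdef]
  have hcodd : ∀ k, k % 2 = 1 →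
      c k = IF0 / (∫ t in (0:ℝ)..T, u k t * (1 - x (k+1) t)) := by
    intro k hk
    simp only [hcdef]
    rw [if_neg (by omega), if_pos hk]
  have hceven : ∀ k, k ≠ 0 → k % 2 = 0 →
      c k = (∫ t in (0:ℝ)..T, u k t * x k t) / (∫ t in (0:ℝ)..T, u k t) := by
    intro k hk0 hk
    simp only [hcdef]
    rw [if_neg hk0, if_neg (by omega)]
  have hctop : c (n+1) = 0 := by
    rw [hceven (n+1) (by omega) (by omega)]
    have h1 : (∫ t in (0:ℝ)..T, u (n+1) t * x (n+1) t) = 0 := by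
      rw [show (fun t => u (n+1) t * x (n+1) t) = fun _ => (0:ℝ)
        from funext fun t => by rw [hxtop t]; ring]
      simp
    rw [h1, zero_div]
  have hcpos : ∀ i, 1 ≤ i → i ≤ n → 0 < c i := by
    intro i h1 h2
    rcases Nat.even_or_odd i with h | h
    · rw [hceven i (by omega) (Nat.even_iff.mp h)]
      exact div_pos (hQxpos i h2) (hIupos i h2)
    · rw [hcodd i (Nat.odd_iff.mp h)]
      exact div_pos hIF0pos (hPpos i h2)
  -- chain inequalities
  have hchain : ∀ i, i ≤ n →
      IF0 ≤ (∫ t in (0:ℝ)..T, u i t) * c i * (1 - c (i+1)) := by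
    intro i hi
    by_cases hpar : i % 2 = 1
    · -- i odd
      have hi1 : 1 ≤ i := by omega
      have hcoddi := hcodd i hpar
      by_cases hin : i = n
      · have hxt : ∀ t, x (i+1) t = 0 := fun t => by rw [hin]; exact hxtop t
        have hct : c (i+1) = 0 := by rw [hin]; exact hctop
        rw [hct, hcoddi]
        have hPn : (∫ t in (0:ℝ)..T, u i t * (1 - x (i+1) t))
            = ∫ t in (0:ℝ)..T, u i t :=
          intervalIntegral.integral_congr fun t _ => by
            show u i t * (1 - x (i+1) t) = u i t
            rw [hxt t]; ring
        rw [hPn]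
        have hIun := hIupos i hi
        have h5 : (∫ t in (0:ℝ)..T, u i t) * (IF0 / (∫ t in (0:ℝ)..T, u i t))
            * (1 - 0) = IF0 := by
          field_simp
          norm_num
        exact le_of_eq h5.symm
      · -- i odd, i < n : use proportionality
        obtain ⟨α, hα, hprop2⟩ := hprop i (Nat.odd_iff.mpr hpar) (by omega)
        have hi2 : i + 1 ≤ n := by omega
        have hc1 : c (i+1) = (∫ t in (0:ℝ)..T, u (i+1) t * x (i+1) t)
            / (∫ t in (0:ℝ)..T, u (i+1) t) := hceven (i+1) (by omega) (by omega)
        have hIui : (∫ t in (0:ℝ)..T, u i t) = α * ∫ t in (0:ℝ)..T, u (i+1) t := by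
          rw [← intervalIntegral.integral_const_mul]
          exact intervalIntegral.integral_congr fun t _ => hprop2 t
        have hPi : (∫ t in (0:ℝ)..T, u i t * (1 - x (i+1) t))
            = α * ((∫ t in (0:ℝ)..T, u (i+1) t)
                - ∫ t in (0:ℝ)..T, u (i+1) t * x (i+1) t) := by
          rw [← intervalIntegral.integral_sub (g := fun t => u (i+1) t * x (i+1) t)
            ((hu_cont (i+1) hi2).intervalIntegrable _ _)
            (((hu_cont (i+1) hi2).mul (hxc (i+1) (by omega))).intervalIntegrable _ _),
            ← intervalIntegral.integral_const_mul]
          apply intervalIntegral.integral_congr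
          intro t _
          show u i t * (1 - x (i+1) t) = α * (u (i+1) t - u (i+1) t * x (i+1) t)
          rw [hprop2 t]; ring
        have hIu1pos := hIupos (i+1) hi2
        have hP1pos := hPpos i hi
        have hD : 0 < (∫ t in (0:ℝ)..T, u (i+1) t)
            - ∫ t in (0:ℝ)..T, u (i+1) t * x (i+1) t := by
          rw [hPi] at hP1pos
          nlinarith
        rw [hcoddi, hc1, hIui, hPi]
        have h5 : α * (∫ t in (0:ℝ)..T, u (i+1) t)
            * (IF0 / (α * ((∫ t in (0:ℝ)..T, u (i+1) t)
                - ∫ t in (0:ℝ)..T, u (i+1) t * x (i+1) t)))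
            * (1 - (∫ t in (0:ℝ)..T, u (i+1) t * x (i+1) t)
                / (∫ t in (0:ℝ)..T, u (i+1) t)) = IF0 := by
          field_simp [hα.ne', hIu1pos.ne', hD.ne']
        exact le_of_eq h5.symm
    · -- i even
      have hpar0 : i % 2 = 0 := by omega
      have hi1 : i + 1 ≤ n := by omega
      have hc1 : c (i+1) = IF0
          / (∫ t in (0:ℝ)..T, u (i+1) t * (1 - x (i+1+1) t)) := hcodd (i+1) (by omega)
      have hsitek := hsite (i+1) (by omega) hi1
      simp only [Nat.add_sub_cancel] at hsitek
      have hkey : (∫ t in (0:ℝ)..T, u i t) * c i = ∫ t in (0:ℝ)..T, u i t * x i t := by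
        by_cases h0 : i = 0
        · subst h0
          rw [hc0, mul_one]
          exact (intervalIntegral.integral_congr fun t _ => by
            show u 0 t * x 0 t = u 0 t
            rw [hx0 t]; ring).symm
        · rw [hceven i h0 hpar0]
          field_simp [(hIupos i hi).ne']
      have hPk := hPpos (i+1) hi1
      have hQk := hQxpos i hi
      rw [hc1, hkey]
      have h6 : (∫ t in (0:ℝ)..T, u i t * x i t)
          * (1 - IF0 / (∫ t in (0:ℝ)..T, u (i+1) t * (1 - x (i+1+1) t)))
          = ((∫ t in (0:ℝ)..T, u i t * x i t)
              * (∫ t in (0:ℝ)..T, u (i+1) t * (1 - x (i+1+1) t))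
            - (∫ t in (0:ℝ)..T, u i t * x i t) * IF0)
            / (∫ t in (0:ℝ)..T, u (i+1) t * (1 - x (i+1+1) t)) := by
        field_simp
      rw [h6, le_div_iff₀ hPk]
      nlinarith [hsitek]
  -- the averaged fluxes at equilibrium are all equal
  have hV : ∀ i, i ≤ n →
      (∫ t in (0:ℝ)..T, u i t) * e i * (1 - e (i+1))
        = (∫ t in (0:ℝ)..T, u 0 t) * e 0 * (1 - e 1) := by
    intro i
    induction i with
    | zero => intro _; rfl
    | succ m ih =>
      intro h
      have heqm := heq (m+1) (by omega) h
      simp only [Nat.add_sub_cancel] at heqm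
      have h2 : (∫ t in (0:ℝ)..T, u (m+1) t) * e (m+1) * (1 - e (m+1+1))
          = (∫ t in (0:ℝ)..T, u m t) * e m * (1 - e (m+1)) := by
        have hTne : T ≠ 0 := hT.ne'
        field_simp at heqm
        linarith
      rw [h2]
      exact ih (by omega)
  have hVn : (∫ t in (0:ℝ)..T, u 0 t) * e 0 * (1 - e 1)
      = (∫ t in (0:ℝ)..T, u n t) * e n := by
    have h1 := hV n le_rfl
    rw [hetop] at h1
    rw [← h1]
    ring
  -- reduce the goal
  have hgoal : (∫ t in (0:ℝ)..T, u n t * x n t) = IF0 := by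
    have h1 : (∫ t in (0:ℝ)..T, u n t * x n t)
        = ∫ t in (0:ℝ)..T, u n t * x n t * (1 - x (n+1) t) :=
      intervalIntegral.integral_congr fun t _ => by
        show u n t * x n t = u n t * x n t * (1 - x (n+1) t)
        rw [hxtop t]; ring
    rw [h1]
    exact hIF n le_rfl
  suffices hfin : IF0 ≤ (∫ t in (0:ℝ)..T, u n t) * e n by
    rw [hgoal, show (1/T * (∫ t in (0:ℝ)..T, u n t)) * e n
      = 1/T * ((∫ t in (0:ℝ)..T, u n t) * e n) from by ring]
    exact mul_le_mul_of_nonneg_left hfin (by positivity)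
  by_contra hcon
  push_neg at hcon
  have hkey2 : ∀ i, 1 ≤ i → i ≤ n+1 → c i < e i := by
    intro i
    induction i with
    | zero => intro h; omega
    | succ m ih =>
      intro _ hm1
      by_cases hm0 : m = 0
      · subst hm0
        have hch := hchain 0 (by omega)
        rw [hc0] at hch
        have hVv := hVn
        rw [he0] at hVv
        have hIu0 := hIupos 0 (by omega)
        nlinarith [hch, hVv, hcon, hIu0]
      · have hm : 1 ≤ m := by omega
        have hmn : m ≤ n := by omega
        have ihm := ih hm (by omega)
        have hch := hchain m hmn
        have hVv := hV m hmn
        have hcp := hcpos m hm hmn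
        have he1 : e (m+1) < 1 := by
          by_cases h : m + 1 ≤ n
          · exact (hemem (m+1) (by omega) h).2
          · rw [show m + 1 = n + 1 by omega, hetop]; norm_num
        have hIum := hIupos m hmn
        have step1 : (∫ t in (0:ℝ)..T, u m t) * c m * (1 - e (m+1))
            < (∫ t in (0:ℝ)..T, u m t) * e m * (1 - e (m+1)) :=
          mul_lt_mul_of_pos_right (mul_lt_mul_of_pos_left ihm hIum) (by linarith)
        have step2 : (∫ t in (0:ℝ)..T, u m t) * c m * (1 - e (m+1))
            < (∫ t in (0:ℝ)..T, u m t) * c m * (1 - c (m+1)) := by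
          linarith [hch, hcon, hVv, hVn, step1]
        have hUc : 0 < (∫ t in (0:ℝ)..T, u m t) * c m := mul_pos hIum hcp
        have h7 := (mul_lt_mul_iff_right₀ hUc).mp step2
        linarith
  have hfalse := hkey2 (n+1) (by omega) le_rfl
  rw [hctop, hetop] at hfalse
  exact absurd hfalse (by norm_num)
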